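/- (Integration by parts for left discrete ABC fractional differences) Let a, b ∈ ℤ with b - a ≥ 2, α ∈ (0,1/2), B(α) > 0, and f, g : {a,...,b} → ℝ. Then Σ_{s=a+1}^{b-1} f(s) · ^{ABC}_a∇^α g(s) = Σ_{s=a+1}^{b-1} g(s-1) · ^{ABR}∇_b^α f(s-1) + (B(α)/(1-α)) · [g(t) · E^1_{\overline{α,1},-α/(1-α),b^-} f(t)]_{t=a}^{t=b-1}. -/

import Mathlib

/-- Nabla discrete Mittag-Leffler function
`E_{\overline{α}}(λ, z) = Σ_{k=0}^∞ λ^k z^{\overline{kα}} / Γ(kα+1)`,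
with the rising function `z^{\overline{β}} = Γ(z+β)/Γ(z)`. -/
noncomputable def dML (α lam z : ℝ) : ℝ :=
  ∑' k : ℕ, lam ^ k * (Real.Gamma (z + k * α) / Real.Gamma z) / Real.Gamma (k * α + 1)

/-- Left ABR nabla fractional difference
`^{ABR}_a∇^α g(t) = (B/(1-α)) ∇_t Σ_{s=a+1}^t g(s) E_{\overline{α}}(-α/(1-α), t-s+1)`. -/
noncomputable def ABRnablaLeft (B α : ℝ) (a : ℤ) (g : ℤ → ℝ) (t : ℤ) : ℝ :=
  (B / (1 - α)) *
    ((fun τ : ℤ => ∑ s ∈ Finset.Icc (a + 1) τ,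
        g s * dML α (-(α / (1 - α))) ((τ : ℝ) - (s : ℝ) + 1)) t
     - (fun τ : ℤ => ∑ s ∈ Finset.Icc (a + 1) τ,
        g s * dML α (-(α / (1 - α))) ((τ : ℝ) - (s : ℝ) + 1)) (t - 1))

/-- Right ABR nabla fractional difference
`^{ABR}∇_b^α f(t) = -(B/(1-α)) Δ_t Σ_{s=t}^{b-1} f(s) E_{\overline{α}}(-α/(1-α), s-t+1)`. -/
noncomputable def ABRnablaRight (B α : ℝ) (b : ℤ) (f : ℤ → ℝ) (t : ℤ) : ℝ :=
  -(B / (1 - α)) *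
    ((fun τ : ℤ => ∑ s ∈ Finset.Icc τ (b - 1),
        f s * dML α (-(α / (1 - α))) ((s : ℝ) - (τ : ℝ) + 1)) (t + 1)
     - (fun τ : ℤ => ∑ s ∈ Finset.Icc τ (b - 1),
        f s * dML α (-(α / (1 - α))) ((s : ℝ) - (τ : ℝ) + 1)) t)

/-- Left ABC nabla fractional difference
`^{ABC}_a∇^α g(t) = (B/(1-α)) Σ_{s=a+1}^t (∇g)(s) E_{\overline{α}}(-α/(1-α), t-s+1)`. -/
noncomputable def ABCnablaLeft (B α : ℝ) (a : ℤ) (g : ℤ → ℝ) (t : ℤ) : ℝ :=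
  (B / (1 - α)) * ∑ s ∈ Finset.Icc (a + 1) t,
    (g s - g (s - 1)) * dML α (-(α / (1 - α))) ((t : ℝ) - (s : ℝ) + 1)

/-- Right discrete generalized fractional operator
`E^1_{\overline{α,1},λ,b^-} f(t) = Σ_{s=t}^{b-1} E_{\overline{α}}(λ, s-t+1) f(s)`. -/
noncomputable def ErightD (α : ℝ) (b : ℤ) (f : ℤ → ℝ) (t : ℤ) : ℝ :=
  ∑ s ∈ Finset.Icc t (b - 1), dML α (-(α / (1 - α))) ((s : ℝ) - (t : ℝ) + 1) * f s


lemma telescope_Icc (a b : ℤ) (h : a < b) (H : ℤ → ℝ) :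
    ∑ r ∈ Finset.Icc (a + 1) b, (H r - H (r - 1)) = H b - H a := by
  rw [Finset.sum_sub_distrib]
  have hmap : ∑ r ∈ Finset.Icc (a + 1) b, H (r - 1) = ∑ r ∈ Finset.Icc a (b - 1), H r := by
    have hm : Finset.Icc (a + 1) b = (Finset.Icc a (b - 1)).map (addRightEmbedding 1) := by
      rw [Finset.map_add_right_Icc]; congr 1; omega
    rw [hm, Finset.sum_map]
    exact Finset.sum_congr rfl (fun x _ => by
      congr 1; simp [addRightEmbedding])
  rw [hmap]
  have h1 : Finset.Icc (a + 1) b = insert b (Finset.Icc (a + 1) (b - 1)) := by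
    ext x; simp only [Finset.mem_Icc, Finset.mem_insert]; omega
  have h2 : Finset.Icc a (b - 1) = insert a (Finset.Icc (a + 1) (b - 1)) := by
    ext x; simp only [Finset.mem_Icc, Finset.mem_insert]; omega
  rw [h1, h2, Finset.sum_insert (by simp only [Finset.mem_Icc]; omega),
    Finset.sum_insert (by simp only [Finset.mem_Icc]; omega)]
  ring

/-- Integration by parts for left discrete ABC fractional differences. -/
theorem ABC_nabla_left_integration_by_parts (a b : ℤ) (hab : 2 ≤ b - a) (α B : ℝ)
    (hα0 : 0 < α) (hα2 : α < 1 / 2) (hB : 0 < B) (f g : ℤ → ℝ) :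
    (∑ s ∈ Finset.Icc (a + 1) (b - 1), f s * ABCnablaLeft B α a g s)
      = (∑ s ∈ Finset.Icc (a + 1) (b - 1), g (s - 1) * ABRnablaRight B α b f (s - 1))
        + (B / (1 - α)) * (g (b - 1) * ErightD α b f (b - 1) - g a * ErightD α b f a) := by
  set lam := -(α / (1 - α)) with hlam
  set c := B / (1 - α) with hc
  set Φ : ℤ → ℝ := fun t => ∑ s ∈ Finset.Icc t (b - 1),
    f s * dML α lam ((s : ℝ) - (t : ℝ) + 1) with hΦ
  have hER : ∀ t, ErightD α b f t = Φ t := by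
    intro t
    simp only [ErightD, hΦ, hlam]
    exact Finset.sum_congr rfl (fun s _ => mul_comm _ _)
  have hABR : ∀ t : ℤ, ABRnablaRight B α b f t = -c * (Φ (t + 1) - Φ t) := by
    intro t
    simp only [ABRnablaRight, hΦ, hlam, hc]
  have hab' : a ≤ b - 1 := by omega
  have step1 : (∑ s ∈ Finset.Icc (a + 1) (b - 1), f s * ABCnablaLeft B α a g s)
      = c * ∑ r ∈ Finset.Icc (a + 1) (b - 1), (g r - g (r - 1)) * Φ r := by
    have e1 : ∀ s : ℤ, f s * ABCnablaLeft B α a g s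
        = ∑ r ∈ Finset.Icc (a + 1) s,
            c * ((g r - g (r - 1)) * (f s * dML α lam ((s : ℝ) - (r : ℝ) + 1))) := by
      intro s
      simp only [ABCnablaLeft, hc, hlam, Finset.mul_sum]
      refine Finset.sum_congr rfl (fun r _ => by ring)
    rw [Finset.sum_congr rfl (fun s _ => e1 s)]
    rw [Finset.sum_comm' (t' := Finset.Icc (a + 1) (b - 1))
      (s' := fun r => Finset.Icc r (b - 1))
      (by intro s r; simp only [Finset.mem_Icc]; omega)]
    rw [Finset.mul_sum]
    refine Finset.sum_congr rfl (fun r _ => ?_)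
    simp only [hΦ, Finset.mul_sum]
    all_goals exact Finset.sum_congr rfl (fun s _ => by ring)
  have tel := telescope_Icc a (b - 1) (by omega) (fun r => g r * Φ r)
  have hsum : ∑ s ∈ Finset.Icc (a + 1) (b - 1), g (s - 1) * ABRnablaRight B α b f (s - 1)
      = ∑ s ∈ Finset.Icc (a + 1) (b - 1), g (s - 1) * (-c * (Φ s - Φ (s - 1))) := by
    refine Finset.sum_congr rfl (fun s _ => ?_)
    rw [hABR (s - 1), show s - 1 + 1 = s from by ring]
  rw [step1, hsum, hER (b - 1), hER a]
  have split : ∑ r ∈ Finset.Icc (a + 1) (b - 1), (g r - g (r - 1)) * Φ r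
      = (g (b - 1) * Φ (b - 1) - g a * Φ a)
        - ∑ r ∈ Finset.Icc (a + 1) (b - 1), g (r - 1) * (Φ r - Φ (r - 1)) := by
    rw [← tel, ← Finset.sum_sub_distrib]
    exact Finset.sum_congr rfl (fun r _ => by ring)
  have h2 : ∑ s ∈ Finset.Icc (a + 1) (b - 1), g (s - 1) * (-c * (Φ s - Φ (s - 1)))
      = -c * ∑ s ∈ Finset.Icc (a + 1) (b - 1), g (s - 1) * (Φ s - Φ (s - 1)) := by
    rw [Finset.mul_sum]
    exact Finset.sum_congr rfl (fun s _ => by ring)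
  rw [split, h2]; ring
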